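/- Let ‖·‖ be a norm on ℝ^d with associated path length ℓ̂ (total variation with respect to ‖·‖). Fix z ∈ ℝ^d with z ≠ 0, and for every n ∈ ℕ let γ_n be a path in ℝ^d connecting 0 and z. Consider: (1) for each ε > 0 there is N ∈ ℕ such that for all n ≥ N and every polygonal approximation Z of γ_n (the polygonal chain through γ_n(t₀), …, γ_n(t_N) for a partition of the parameter interval), the sum of ℓ̂(s) over those segments s of Z whose angle with the segment from 0 to z exceeds ε is less than ε; (2) lim_{n→∞} ℓ̂(γ_n) = ‖z‖. Then (1) implies (2) for any norm ‖·‖, and (2) implies (1) whenever the closed unit ball of ‖·‖ is strictly convex. -/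

import Mathlib

open Set
open scoped ENNReal Classical

/-- The length (total variation w.r.t. the norm-like function `N`) of a path `γ` over
`[a,b]`, as the supremum over partitions `a = t₀ ≤ t₁ ≤ … ≤ tₙ = b` of the sums of
`N`-norms of increments. -/
noncomputable def lenWith {d : ℕ} (N : EuclideanSpace ℝ (Fin d) → ℝ)
    (γ : ℝ → EuclideanSpace ℝ (Fin d)) (a b : ℝ) : ℝ≥0∞ :=
  ⨆ n : ℕ, ⨆ t : {t : ℕ → ℝ // Monotone t ∧ t 0 = a ∧ t n = b},
    ∑ i ∈ Finset.range n, ENNReal.ofReal (N (γ (t.1 (i + 1)) - γ (t.1 i)))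

/-- Condition (1) of the lemma: for every `ε > 0`, eventually in `n`, every polygonal
approximation of `γ_n` has total `N`-length less than `ε` along the segments making an
angle greater than `ε` with the segment from `0` to `z`. -/
def SmallBadAngleLength {d : ℕ} (N : EuclideanSpace ℝ (Fin d) → ℝ)
    (z : EuclideanSpace ℝ (Fin d)) (a b : ℕ → ℝ)
    (γ : ℕ → ℝ → EuclideanSpace ℝ (Fin d)) : Prop :=
  ∀ ε : ℝ, 0 < ε → ∃ N₀ : ℕ, ∀ n ≥ N₀, ∀ (k : ℕ) (t : ℕ → ℝ),
    Monotone t → t 0 = a n → t k = b n →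
    ∑ i ∈ (Finset.range k).filter
        (fun i => ε < InnerProductGeometry.angle (γ n (t (i + 1)) - γ n (t i)) z),
      N (γ n (t (i + 1)) - γ n (t i)) < ε

section Aux
variable {d : ℕ} {N : EuclideanSpace ℝ (Fin d) → ℝ}

lemma auxN_zero (hN0 : ∀ x, N x = 0 ↔ x = 0) : N 0 = 0 := (hN0 0).mpr rfl

lemma auxN_neg (hNsmul : ∀ (c : ℝ) (x), N (c • x) = |c| * N x) (x) : N (-x) = N x := by
  have := hNsmul (-1) x
  simpa using this

lemma auxN_nonneg (hN0 : ∀ x, N x = 0 ↔ x = 0)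
    (hNsmul : ∀ (c : ℝ) (x), N (c • x) = |c| * N x)
    (hNadd : ∀ x y, N (x + y) ≤ N x + N y) (x) : 0 ≤ N x := by
  have h := hNadd x (-x)
  rw [add_neg_cancel, auxN_zero hN0, auxN_neg hNsmul] at h
  linarith

lemma auxN_sum_le (hN0 : ∀ x, N x = 0 ↔ x = 0)
    (hNadd : ∀ x y, N (x + y) ≤ N x + N y) {ι : Type*} (s : Finset ι)
    (f : ι → EuclideanSpace ℝ (Fin d)) :
    N (∑ i ∈ s, f i) ≤ ∑ i ∈ s, N (f i) := by
  classical
  induction s using Finset.cons_induction with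
  | empty => simp [auxN_zero hN0]
  | cons i s hi ih =>
    rw [Finset.sum_cons, Finset.sum_cons]
    exact (hNadd _ _).trans (by linarith)

lemma auxN_exists_C (hN0 : ∀ x, N x = 0 ↔ x = 0)
    (hNsmul : ∀ (c : ℝ) (x), N (c • x) = |c| * N x)
    (hNadd : ∀ x y, N (x + y) ≤ N x + N y) :
    ∃ C : ℝ, 0 < C ∧ ∀ x, N x ≤ C * ‖x‖ := by
  classical
  refine ⟨(∑ i : Fin d, N (EuclideanSpace.single i 1)) + 1, ?_, ?_⟩
  · have : 0 ≤ ∑ i : Fin d, N (EuclideanSpace.single i 1) :=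
      Finset.sum_nonneg fun i _ => auxN_nonneg hN0 hNsmul hNadd _
    linarith
  · intro x
    have hx : x = ∑ i : Fin d, x i • EuclideanSpace.single i (1:ℝ) := by
      have := (EuclideanSpace.basisFun (Fin d) ℝ).sum_repr x
      simp only [EuclideanSpace.basisFun_apply, EuclideanSpace.basisFun_repr] at this
      exact this.symm
    calc N x = N (∑ i : Fin d, x i • EuclideanSpace.single i (1:ℝ)) := by rw [← hx]
      _ ≤ ∑ i : Fin d, N (x i • EuclideanSpace.single i (1:ℝ)) :=
          auxN_sum_le hN0 hNadd _ _
      _ = ∑ i : Fin d, |x i| * N (EuclideanSpace.single i (1:ℝ)) := by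
          simp [hNsmul]
      _ ≤ ∑ i : Fin d, ‖x‖ * N (EuclideanSpace.single i (1:ℝ)) := by
          refine Finset.sum_le_sum fun i _ => ?_
          have h1 : |x i| ≤ ‖x‖ := by
            rw [EuclideanSpace.norm_eq, ← Real.sqrt_sq_eq_abs]
            apply Real.sqrt_le_sqrt
            have := Finset.single_le_sum (f := fun j => ‖x j‖ ^ 2)
              (fun j _ => sq_nonneg _) (Finset.mem_univ i)
            simpa [Real.norm_eq_abs, sq_abs] using this
          exact mul_le_mul_of_nonneg_right h1 (auxN_nonneg hN0 hNsmul hNadd _)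
      _ = (∑ i : Fin d, N (EuclideanSpace.single i (1:ℝ))) * ‖x‖ := by
          rw [Finset.sum_mul]
          exact Finset.sum_congr rfl fun i _ => mul_comm _ _
      _ ≤ ((∑ i : Fin d, N (EuclideanSpace.single i (1:ℝ))) + 1) * ‖x‖ := by
          have := norm_nonneg x; nlinarith

lemma auxN_continuous (hNsmul : ∀ (c : ℝ) (x), N (c • x) = |c| * N x)
    (hNadd : ∀ x y, N (x + y) ≤ N x + N y)
    {C : ℝ} (hC : ∀ x, N x ≤ C * ‖x‖) : Continuous N := by
  rw [Metric.continuous_iff]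
  intro x ε hε
  rcases le_or_gt C 0 with hC0 | hC0
  · refine ⟨1, one_pos, fun y _ => ?_⟩
    have h1 : N (y - x) ≤ C * ‖y - x‖ := hC _
    have h2 : N (x - y) ≤ C * ‖x - y‖ := hC _
    have h3 : N y ≤ N x + N (y - x) := by
      have := hNadd x (y - x); simpa using this
    have h4 : N x ≤ N y + N (x - y) := by
      have := hNadd y (x - y); simpa using this
    have h5 : 0 ≤ N (y-x) := by
      have := hNadd (y-x) (-(y-x))
      rw [add_neg_cancel] at this
      have hneg := auxN_neg hNsmul (y - x)
      have h0 : N 0 ≤ N (y-x) + N (y-x) := by rw [← hneg] at this ⊢; linarith [this]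
      have : N (0 : EuclideanSpace ℝ (Fin d)) = 0 := by
        have := hNsmul 0 0; simpa using this
      linarith
    have h6 : 0 ≤ N (x-y) := by
      have hneg := auxN_neg hNsmul (y - x)
      have : x - y = -(y-x) := by abel
      rw [this, hneg]; exact h5
    have hc1 : C * ‖y - x‖ ≤ 0 := mul_nonpos_of_nonpos_of_nonneg hC0 (norm_nonneg _)
    have hc2 : C * ‖x - y‖ ≤ 0 := mul_nonpos_of_nonpos_of_nonneg hC0 (norm_nonneg _)
    have : N y = N x := le_antisymm (by linarith) (by linarith)
    rw [Real.dist_eq, this]; simpa using hε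
  · refine ⟨ε / C, by positivity, fun y hy => ?_⟩
    have h3 : N y ≤ N x + N (y - x) := by
      have := hNadd x (y - x); simpa using this
    have h4 : N x ≤ N y + N (x - y) := by
      have := hNadd y (x - y); simpa using this
    have h1 : N (y - x) ≤ C * ‖y - x‖ := hC _
    have h2 : N (x - y) ≤ C * ‖x - y‖ := hC _
    have hd : ‖y - x‖ < ε / C := by rwa [← dist_eq_norm]
    have hd' : ‖x - y‖ < ε / C := by rwa [norm_sub_rev]
    rw [Real.dist_eq, abs_lt]
    constructor
    · have := mul_lt_mul_of_pos_left hd' hC0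
      rw [mul_div_cancel₀ _ (ne_of_gt hC0)] at this
      linarith
    · have := mul_lt_mul_of_pos_left hd hC0
      rw [mul_div_cancel₀ _ (ne_of_gt hC0)] at this
      linarith

lemma auxN_exists_c (hN0 : ∀ x, N x = 0 ↔ x = 0)
    (hNsmul : ∀ (c : ℝ) (x), N (c • x) = |c| * N x)
    (hNadd : ∀ x y, N (x + y) ≤ N x + N y)
    {z : EuclideanSpace ℝ (Fin d)} (hz : z ≠ 0) :
    ∃ c : ℝ, 0 < c ∧ ∀ x, c * ‖x‖ ≤ N x := by
  obtain ⟨C, hC0, hC⟩ := auxN_exists_C hN0 hNsmul hNadd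
  have hcont : Continuous N := auxN_continuous hNsmul hNadd hC
  have hco : IsCompact (Metric.sphere (0 : EuclideanSpace ℝ (Fin d)) 1) :=
    isCompact_sphere 0 1
  have hne : (Metric.sphere (0 : EuclideanSpace ℝ (Fin d)) 1).Nonempty := by
    refine ⟨‖z‖⁻¹ • z, ?_⟩
    simp [norm_smul, norm_norm, abs_of_nonneg (inv_nonneg.mpr (norm_nonneg z)),
      inv_mul_cancel₀ (norm_ne_zero_iff.mpr hz)]
  obtain ⟨x₀, hx₀s, hx₀min⟩ := hco.exists_isMinOn hne hcont.continuousOn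
  have hx₀norm : ‖x₀‖ = 1 := by simpa using hx₀s
  have hx₀ne : x₀ ≠ 0 := by intro h; rw [h] at hx₀norm; simp at hx₀norm
  have hc0 : 0 < N x₀ := by
    rcases lt_or_eq_of_le (auxN_nonneg hN0 hNsmul hNadd x₀) with h | h
    · exact h
    · exact absurd ((hN0 x₀).mp h.symm) hx₀ne
  refine ⟨N x₀, hc0, fun x => ?_⟩
  rcases eq_or_ne x 0 with rfl | hx
  · simp [auxN_zero hN0]
  · have hxn : (0:ℝ) < ‖x‖ := norm_pos_iff.mpr hx
    have hmem : ‖x‖⁻¹ • x ∈ Metric.sphere (0 : EuclideanSpace ℝ (Fin d)) 1 := by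
      simp [norm_smul, abs_of_nonneg (inv_nonneg.mpr (norm_nonneg x)),
        inv_mul_cancel₀ (ne_of_gt hxn)]
    have hmin : N x₀ ≤ N (‖x‖⁻¹ • x) := hx₀min hmem
    have h2 : N (‖x‖⁻¹ • x) = ‖x‖⁻¹ * N x := by
      rw [hNsmul]; rw [abs_of_nonneg (inv_nonneg.mpr (norm_nonneg x))]
    rw [h2] at hmin
    have := hmin
    calc N x₀ * ‖x‖ ≤ (‖x‖⁻¹ * N x) * ‖x‖ := by
          exact mul_le_mul_of_nonneg_right this (norm_nonneg x)
      _ = N x := by field_simp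
end Aux



section Aux2
variable {d : ℕ} {N : EuclideanSpace ℝ (Fin d) → ℝ}

lemma lenWith_ge (hNnonneg : ∀ x, 0 ≤ N x) (γ : ℝ → EuclideanSpace ℝ (Fin d)) (a b : ℝ)
    (n : ℕ) (t : ℕ → ℝ) (ht : Monotone t) (ha : t 0 = a) (hb : t n = b) :
    ENNReal.ofReal (∑ i ∈ Finset.range n, N (γ (t (i+1)) - γ (t i))) ≤ lenWith N γ a b := by
  rw [ENNReal.ofReal_sum_of_nonneg (fun i _ => hNnonneg _)]
  exact le_iSup_of_le n (le_iSup_of_le ⟨t, ht, ha, hb⟩ le_rfl)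

lemma lenWith_ge_endpoints (hNnonneg : ∀ x, 0 ≤ N x)
    (γ : ℝ → EuclideanSpace ℝ (Fin d)) {a b : ℝ} (hab : a ≤ b) :
    ENNReal.ofReal (N (γ b - γ a)) ≤ lenWith N γ a b := by
  have hmono : Monotone (fun i : ℕ => if i = 0 then a else b) := by
    intro i j hij
    rcases Nat.eq_zero_or_pos i with rfl | hi
    · rcases Nat.eq_zero_or_pos j with rfl | hj
      · simp
      · simp [Nat.pos_iff_ne_zero.mp hj, hab]
    · have hj : j ≠ 0 := by omega
      simp [Nat.pos_iff_ne_zero.mp hi, hj, le_refl]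
  have := lenWith_ge hNnonneg γ a b 1 (fun i => if i = 0 then a else b) hmono (by simp) (by simp)
  simpa using this

lemma lenWith_le (hNnonneg : ∀ x, 0 ≤ N x) (γ : ℝ → EuclideanSpace ℝ (Fin d)) (a b : ℝ)
    {M : ℝ}
    (h : ∀ (n : ℕ) (t : ℕ → ℝ), Monotone t → t 0 = a → t n = b →
      ∑ i ∈ Finset.range n, N (γ (t (i+1)) - γ (t i)) ≤ M) :
    lenWith N γ a b ≤ ENNReal.ofReal M := by
  refine iSup_le fun n => iSup_le fun t => ?_
  rw [← ENNReal.ofReal_sum_of_nonneg (fun i _ => hNnonneg _)]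
  exact ENNReal.ofReal_le_ofReal (h n t.1 t.2.1 t.2.2.1 t.2.2.2)

lemma aux_exists_g (hN0 : ∀ x, N x = 0 ↔ x = 0)
    (hNsmul : ∀ (c : ℝ) (x), N (c • x) = |c| * N x)
    (hNadd : ∀ x y, N (x + y) ≤ N x + N y)
    (z : EuclideanSpace ℝ (Fin d)) (hz : z ≠ 0) :
    ∃ g : EuclideanSpace ℝ (Fin d) →ₗ[ℝ] ℝ, g z = N z ∧ ∀ x, g x ≤ N x := by
  have hNnonneg : ∀ x, 0 ≤ N x := fun x => by
    have h := hNadd x (-x)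
    have h2 : N (-x) = N x := by simpa using hNsmul (-1) x
    have h0 : N 0 = 0 := (hN0 0).mpr rfl
    rw [add_neg_cancel, h0, h2] at h
    linarith
  have hf : ∀ x : (LinearPMap.mkSpanSingleton (K := ℝ) (σ := RingHom.id ℝ) z (N z) hz).domain,
      (LinearPMap.mkSpanSingleton (K := ℝ) (σ := RingHom.id ℝ) z (N z) hz) x ≤ N x := by
    rintro ⟨x, hx⟩
    obtain ⟨c, rfl⟩ := Submodule.mem_span_singleton.mp hx
    have happ : (LinearPMap.mkSpanSingleton (K := ℝ) (σ := RingHom.id ℝ) z (N z) hz) ⟨c • z, hx⟩ = c • N z :=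
      LinearPMap.mkSpanSingleton'_apply _ _ _ c _
    rw [happ, hNsmul]
    have : c ≤ |c| := le_abs_self c
    have := hNnonneg z
    simp only [smul_eq_mul]
    nlinarith
  obtain ⟨g, hg1, hg2⟩ := exists_extension_of_le_sublinear
    (LinearPMap.mkSpanSingleton (K := ℝ) (σ := RingHom.id ℝ) z (N z) hz) N
    (fun c hc x => by rw [hNsmul, abs_of_pos hc]) hNadd hf
  refine ⟨g, ?_, hg2⟩
  have h := hg1 ⟨z, Submodule.mem_span_singleton_self z⟩
  rwa [LinearPMap.mkSpanSingleton_apply ℝ ℝ hz (N z)] at h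

lemma aux_g_strict (hN0 : ∀ x, N x = 0 ↔ x = 0)
    (hNsmul : ∀ (c : ℝ) (x), N (c • x) = |c| * N x)
    (hNadd : ∀ x y, N (x + y) ≤ N x + N y)
    (hSC : ∀ x y, N x = 1 → N y = 1 → x ≠ y → N ((2 : ℝ)⁻¹ • (x + y)) < 1)
    {z : EuclideanSpace ℝ (Fin d)} (hz : z ≠ 0)
    {g : EuclideanSpace ℝ (Fin d) →ₗ[ℝ] ℝ} (hgz : g z = N z) (hg : ∀ x, g x ≤ N x)
    {x : EuclideanSpace ℝ (Fin d)} (hx : x ≠ 0) (hgx : g x = N x) :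
    ∃ c : ℝ, 0 < c ∧ x = c • z := by
  have hNz : 0 < N z := by
    rcases lt_or_eq_of_le (auxN_nonneg hN0 hNsmul hNadd z) with h | h
    · exact h
    · exact absurd ((hN0 z).mp h.symm) hz
  have hNx : 0 < N x := by
    rcases lt_or_eq_of_le (auxN_nonneg hN0 hNsmul hNadd x) with h | h
    · exact h
    · exact absurd ((hN0 x).mp h.symm) hx
  set u := (N z)⁻¹ • z with hu
  set w := (N x)⁻¹ • x with hw
  have hNu : N u = 1 := by
    rw [hu, hNsmul, abs_of_pos (inv_pos.mpr hNz), inv_mul_cancel₀ (ne_of_gt hNz)]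
  have hNw : N w = 1 := by
    rw [hw, hNsmul, abs_of_pos (inv_pos.mpr hNx), inv_mul_cancel₀ (ne_of_gt hNx)]
  have hgu : g u = 1 := by
    rw [hu, map_smul, smul_eq_mul, hgz, inv_mul_cancel₀ (ne_of_gt hNz)]
  have hgw : g w = 1 := by
    rw [hw, map_smul, smul_eq_mul, hgx, inv_mul_cancel₀ (ne_of_gt hNx)]
  have hwu : w = u := by
    by_contra hne
    have h1 : N ((2:ℝ)⁻¹ • (w + u)) < 1 := hSC w u hNw hNu hne
    have h2 : g ((2:ℝ)⁻¹ • (w + u)) = 1 := by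
      rw [map_smul, map_add, hgu, hgw]; norm_num
    have := hg ((2:ℝ)⁻¹ • (w + u))
    rw [h2] at this
    linarith
  have : (N x) • w = (N x) • u := by rw [hwu]
  rw [hw, hu, smul_smul, smul_smul, mul_inv_cancel₀ (ne_of_gt hNx), one_smul] at this
  exact ⟨N x * (N z)⁻¹, mul_pos hNx (inv_pos.mpr hNz), this⟩

end Aux2
section Aux3
variable {d : ℕ} {N : EuclideanSpace ℝ (Fin d) → ℝ}

lemma aux_exists_delta (hN0 : ∀ x, N x = 0 ↔ x = 0)
    (hNsmul : ∀ (c : ℝ) (x), N (c • x) = |c| * N x)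
    (hNadd : ∀ x y, N (x + y) ≤ N x + N y)
    (hSC : ∀ x y, N x = 1 → N y = 1 → x ≠ y → N ((2 : ℝ)⁻¹ • (x + y)) < 1)
    {z : EuclideanSpace ℝ (Fin d)} (hz : z ≠ 0)
    {g : EuclideanSpace ℝ (Fin d) →ₗ[ℝ] ℝ} (hgz : g z = N z) (hg : ∀ x, g x ≤ N x)
    {ε : ℝ} (hε : 0 < ε) (hεπ : ε < Real.pi) :
    ∃ δ : ℝ, 0 < δ ∧ ∀ v, ε < InnerProductGeometry.angle v z → δ * ‖v‖ ≤ N v - g v := by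
  obtain ⟨C, hC0, hCb⟩ := auxN_exists_C hN0 hNsmul hNadd
  have hcont : Continuous N := auxN_continuous hNsmul hNadd hCb
  have hgcont : Continuous g := g.continuous_of_finiteDimensional
  set S : Set (EuclideanSpace ℝ (Fin d)) :=
    Metric.sphere 0 1 ∩ {x | (inner ℝ x z : ℝ) ≤ Real.cos ε * ‖z‖} with hS
  have hSclosed : IsClosed {x : EuclideanSpace ℝ (Fin d) | (inner ℝ x z : ℝ) ≤ Real.cos ε * ‖z‖} :=
    isClosed_le (Continuous.inner continuous_id continuous_const) continuous_const
  have hScompact : IsCompact S := (isCompact_sphere 0 1).inter_right hSclosed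
  -- key : on S, N - g is positive
  have hpos : ∀ x ∈ S, 0 < N x - g x := by
    rintro x ⟨hx1, hx2⟩
    have hxnorm : ‖x‖ = 1 := by simpa using hx1
    have hxne : x ≠ 0 := by intro h; rw [h] at hxnorm; simp at hxnorm
    rcases lt_or_eq_of_le (hg x) with h | h
    · linarith
    · exfalso
      obtain ⟨c, hc0, rfl⟩ := aux_g_strict hN0 hNsmul hNadd hSC hz hgz hg hxne h
      have hinner : (inner ℝ (c • z) z : ℝ) = c * (‖z‖ * ‖z‖) := by
        rw [real_inner_smul_left, real_inner_self_eq_norm_mul_norm]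
      have hnorm : c * ‖z‖ = 1 := by
        rw [norm_smul, Real.norm_eq_abs, abs_of_pos hc0] at hxnorm
        exact hxnorm
      have hzpos : 0 < ‖z‖ := norm_pos_iff.mpr hz
      have h2 : (inner ℝ (c • z) z : ℝ) = ‖z‖ := by
        rw [hinner]; nlinarith
      rw [mem_setOf_eq, h2] at hx2
      have hcos : Real.cos ε < 1 := by
        have := Real.cos_lt_cos_of_nonneg_of_le_pi le_rfl (le_of_lt hεπ) hε
        simpa using this
      nlinarith
  rcases S.eq_empty_or_nonempty with hSe | hSne
  · refine ⟨1, one_pos, fun v hv => ?_⟩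
    rcases eq_or_ne v 0 with rfl | hvne
    · simp [auxN_zero hN0, map_zero]
    · exfalso
      have hvnorm : (0:ℝ) < ‖v‖ := norm_pos_iff.mpr hvne
      have hmem : ‖v‖⁻¹ • v ∈ S := by
        constructor
        · simp [norm_smul, abs_of_pos (inv_pos.mpr hvnorm), inv_mul_cancel₀ (ne_of_gt hvnorm)]
        · have hang : InnerProductGeometry.angle (‖v‖⁻¹ • v) z
              = InnerProductGeometry.angle v z :=
            InnerProductGeometry.angle_smul_left_of_pos v z (inv_pos.mpr hvnorm)
          have h1 : (inner ℝ (‖v‖⁻¹ • v) z : ℝ) =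
              Real.cos (InnerProductGeometry.angle (‖v‖⁻¹ • v) z) * (‖‖v‖⁻¹ • v‖ * ‖z‖) :=
            (InnerProductGeometry.cos_angle_mul_norm_mul_norm _ _).symm
          have h2 : ‖‖v‖⁻¹ • v‖ = 1 := by
            simp [norm_smul, abs_of_pos (inv_pos.mpr hvnorm), inv_mul_cancel₀ (ne_of_gt hvnorm)]
          have h3 : Real.cos (InnerProductGeometry.angle v z) ≤ Real.cos ε :=
            le_of_lt (Real.cos_lt_cos_of_nonneg_of_le_pi (le_of_lt hε)
              (InnerProductGeometry.angle_le_pi v z) hv)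
          rw [mem_setOf_eq, h1, hang, h2, one_mul]
          have := norm_nonneg z
          nlinarith
      rw [hSe] at hmem
      exact hmem
  · obtain ⟨x₀, hx₀S, hx₀min⟩ := hScompact.exists_isMinOn hSne
      (hcont.sub hgcont).continuousOn
    refine ⟨N x₀ - g x₀, hpos x₀ hx₀S, fun v hv => ?_⟩
    rcases eq_or_ne v 0 with rfl | hvne
    · simp [auxN_zero hN0, map_zero]
    · have hvnorm : (0:ℝ) < ‖v‖ := norm_pos_iff.mpr hvne
      have hmem : ‖v‖⁻¹ • v ∈ S := by
        constructor
        · simp [norm_smul, abs_of_pos (inv_pos.mpr hvnorm), inv_mul_cancel₀ (ne_of_gt hvnorm)]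
        · have hang : InnerProductGeometry.angle (‖v‖⁻¹ • v) z
              = InnerProductGeometry.angle v z :=
            InnerProductGeometry.angle_smul_left_of_pos v z (inv_pos.mpr hvnorm)
          have h1 : (inner ℝ (‖v‖⁻¹ • v) z : ℝ) =
              Real.cos (InnerProductGeometry.angle (‖v‖⁻¹ • v) z) * (‖‖v‖⁻¹ • v‖ * ‖z‖) :=
            (InnerProductGeometry.cos_angle_mul_norm_mul_norm _ _).symm
          have h2 : ‖‖v‖⁻¹ • v‖ = 1 := by
            simp [norm_smul, abs_of_pos (inv_pos.mpr hvnorm), inv_mul_cancel₀ (ne_of_gt hvnorm)]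
          have h3 : Real.cos (InnerProductGeometry.angle v z) ≤ Real.cos ε :=
            le_of_lt (Real.cos_lt_cos_of_nonneg_of_le_pi (le_of_lt hε)
              (InnerProductGeometry.angle_le_pi v z) hv)
          rw [mem_setOf_eq, h1, hang, h2, one_mul]
          have := norm_nonneg z
          nlinarith
      have hmin : N x₀ - g x₀ ≤ N (‖v‖⁻¹ • v) - g (‖v‖⁻¹ • v) := hx₀min hmem
      have hNv : N (‖v‖⁻¹ • v) = ‖v‖⁻¹ * N v := by
        rw [hNsmul, abs_of_pos (inv_pos.mpr hvnorm)]
      have hgv : g (‖v‖⁻¹ • v) = ‖v‖⁻¹ * g v := by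
        rw [map_smul, smul_eq_mul]
      rw [hNv, hgv] at hmin
      have := mul_le_mul_of_nonneg_right hmin (le_of_lt hvnorm)
      calc (N x₀ - g x₀) * ‖v‖ ≤ (‖v‖⁻¹ * N v - ‖v‖⁻¹ * g v) * ‖v‖ := this
        _ = N v - g v := by field_simp

lemma partition_lower (hN0 : ∀ x, N x = 0 ↔ x = 0)
    (hNsmul : ∀ (c : ℝ) (x), N (c • x) = |c| * N x)
    (hNadd : ∀ x y, N (x + y) ≤ N x + N y)
    {z : EuclideanSpace ℝ (Fin d)}
    {g : EuclideanSpace ℝ (Fin d) →ₗ[ℝ] ℝ} (hgz : g z = N z) (hg : ∀ x, g x ≤ N x)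
    {ε δ C : ℝ} (hδ0 : 0 < δ) (hC0 : 0 < C) (hCb : ∀ x, N x ≤ C * ‖x‖)
    (hδ : ∀ v, ε < InnerProductGeometry.angle v z → δ * ‖v‖ ≤ N v - g v)
    (k : ℕ) (v : ℕ → EuclideanSpace ℝ (Fin d)) (hsum : ∑ i ∈ Finset.range k, v i = z) :
    N z + (δ / C) * ∑ i ∈ (Finset.range k).filter
        (fun i => ε < InnerProductGeometry.angle (v i) z), N (v i)
      ≤ ∑ i ∈ Finset.range k, N (v i) := by
  classical
  have hgsum : ∑ i ∈ Finset.range k, g (v i) = N z := by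
    rw [← map_sum, hsum, hgz]
  have hstep : ∀ i ∈ (Finset.range k).filter
      (fun i => ε < InnerProductGeometry.angle (v i) z),
      (δ / C) * N (v i) ≤ N (v i) - g (v i) := by
    intro i hi
    have hang := (Finset.mem_filter.mp hi).2
    have h1 := hδ (v i) hang
    have h2 : N (v i) ≤ C * ‖v i‖ := hCb _
    have h3 : 0 ≤ N (v i) := auxN_nonneg hN0 hNsmul hNadd _
    have h4 : (δ / C) * N (v i) ≤ δ * ‖v i‖ := by
      rw [div_mul_eq_mul_div, div_le_iff₀ hC0]
      nlinarith [mul_le_mul_of_nonneg_left h2 (le_of_lt hδ0)]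
    linarith
  have hsub : ∑ i ∈ (Finset.range k).filter
      (fun i => ε < InnerProductGeometry.angle (v i) z), (N (v i) - g (v i))
      ≤ ∑ i ∈ Finset.range k, (N (v i) - g (v i)) := by
    apply Finset.sum_le_sum_of_subset_of_nonneg (Finset.filter_subset _ _)
    intro i _ _
    linarith [hg (v i)]
  have h5 : ∑ i ∈ (Finset.range k).filter
      (fun i => ε < InnerProductGeometry.angle (v i) z), (δ / C) * N (v i)
      ≤ ∑ i ∈ (Finset.range k).filter
      (fun i => ε < InnerProductGeometry.angle (v i) z), (N (v i) - g (v i)) :=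
    Finset.sum_le_sum hstep
  rw [← Finset.mul_sum] at h5
  have h6 : ∑ i ∈ Finset.range k, (N (v i) - g (v i))
      = ∑ i ∈ Finset.range k, N (v i) - N z := by
    rw [Finset.sum_sub_distrib, hgsum]
  linarith

end Aux3
section Aux4
variable {d : ℕ} {N : EuclideanSpace ℝ (Fin d) → ℝ}

lemma good_vec (hN0 : ∀ x, N x = 0 ↔ x = 0)
    (hNsmul : ∀ (c : ℝ) (x), N (c • x) = |c| * N x)
    (hNadd : ∀ x y, N (x + y) ≤ N x + N y)
    {C : ℝ} (hC0 : 0 < C) (hCb : ∀ x, N x ≤ C * ‖x‖)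
    {z : EuclideanSpace ℝ (Fin d)} (hz : z ≠ 0)
    {ε : ℝ} (hε : 0 < ε) (hεlt : ε < Real.pi / 2)
    (v : EuclideanSpace ℝ (Fin d)) (hgood : InnerProductGeometry.angle v z ≤ ε) :
    0 ≤ (inner ℝ v z : ℝ) ∧
    N v ≤ (inner ℝ v z : ℝ) * ((N z + C * ‖z‖ * (Real.sin ε / Real.cos ε)) / ‖z‖ ^ 2) := by
  have hzn : (0:ℝ) < ‖z‖ := norm_pos_iff.mpr hz
  have hcosε : 0 < Real.cos ε := Real.cos_pos_of_mem_Ioo ⟨by linarith [Real.pi_div_two_pos], hεlt⟩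
  rcases eq_or_ne v 0 with rfl | hvne
  · simp [auxN_zero hN0]
  · have hvn : (0:ℝ) < ‖v‖ := norm_pos_iff.mpr hvne
    set θ := InnerProductGeometry.angle v z with hθ
    have hθ0 : 0 ≤ θ := InnerProductGeometry.angle_nonneg v z
    have ht : (inner ℝ v z : ℝ) = Real.cos θ * (‖v‖ * ‖z‖) :=
      (InnerProductGeometry.cos_angle_mul_norm_mul_norm v z).symm
    have hcosθ : Real.cos ε ≤ Real.cos θ :=
      Real.cos_le_cos_of_nonneg_of_le_pi hθ0 (by linarith [Real.pi_div_two_pos, Real.pi_pos]) hgood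
    set t : ℝ := (inner ℝ v z : ℝ) with htd
    clear_value θ
    have htpos : Real.cos ε * (‖v‖ * ‖z‖) ≤ t := by
      rw [ht]
      exact mul_le_mul_of_nonneg_right hcosθ (by positivity)
    have ht0 : 0 ≤ t := le_trans (by positivity) htpos
    constructor
    · exact ht0
    -- decomposition
    clear_value t
    set q : EuclideanSpace ℝ (Fin d) := v - (t / ‖z‖ ^ 2) • z with hq
    clear_value q
    have hdecomp : v = (t / ‖z‖ ^ 2) • z + q := by rw [hq]; abel
    have hNdec : N v ≤ (t / ‖z‖ ^ 2) * N z + N q := by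
      calc N v = N ((t / ‖z‖ ^ 2) • z + q) := by rw [← hdecomp]
        _ ≤ N ((t / ‖z‖ ^ 2) • z) + N q := hNadd _ _
        _ = (t / ‖z‖ ^ 2) * N z + N q := by
            rw [hNsmul, abs_of_nonneg (by positivity : (0:ℝ) ≤ t / ‖z‖ ^ 2)]
    -- norm of q
    have hq2 : ‖q‖ ^ 2 = ‖v‖ ^ 2 - t ^ 2 / ‖z‖ ^ 2 := by
      rw [hq, norm_sub_sq_real, real_inner_smul_right, norm_smul, Real.norm_eq_abs]
      rw [mul_pow, sq_abs, ← htd]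
      field_simp
      ring
    have hsinθ : Real.sin θ ≤ Real.sin ε :=
      Real.sin_le_sin_of_le_of_le_pi_div_two (by linarith [Real.pi_div_two_pos])
        (le_of_lt hεlt) hgood
    have hsinθ0 : 0 ≤ Real.sin θ :=
      Real.sin_nonneg_of_nonneg_of_le_pi hθ0 (by rw [hθ]; exact InnerProductGeometry.angle_le_pi v z)
    have hq2' : ‖q‖ ^ 2 = ‖v‖ ^ 2 * Real.sin θ ^ 2 := by
      have hpyth := Real.sin_sq_add_cos_sq θ
      have h5 : (Real.cos θ * (‖v‖ * ‖z‖)) ^ 2 / ‖z‖ ^ 2 = Real.cos θ ^ 2 * ‖v‖ ^ 2 := by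
        field_simp
      rw [hq2, ht, h5]
      linear_combination -‖v‖ ^ 2 * hpyth
    have hsε : 0 ≤ Real.sin ε := le_trans hsinθ0 hsinθ
    have hqle : ‖q‖ ≤ ‖v‖ * Real.sin ε := by
      have hsq : Real.sin θ ^ 2 ≤ Real.sin ε ^ 2 := pow_le_pow_left₀ hsinθ0 hsinθ 2
      have h1 : ‖q‖ ^ 2 ≤ (‖v‖ * Real.sin ε) ^ 2 := by
        rw [hq2', mul_pow]
        exact mul_le_mul_of_nonneg_left hsq (sq_nonneg ‖v‖)
      have h2 : (0:ℝ) ≤ ‖v‖ * Real.sin ε := by positivity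
      have h3 := Real.sqrt_le_sqrt h1
      rwa [Real.sqrt_sq (norm_nonneg q), Real.sqrt_sq h2] at h3
    have hvle : ‖v‖ ≤ t / (Real.cos ε * ‖z‖) := by
      rw [le_div_iff₀ (by positivity)]
      have heq : ‖v‖ * (Real.cos ε * ‖z‖) = Real.cos ε * (‖v‖ * ‖z‖) := by ring
      rw [heq]
      exact htpos
    have hNq : N q ≤ C * (Real.sin ε / Real.cos ε) * (t / ‖z‖) := by
      calc N q ≤ C * ‖q‖ := hCb q
        _ ≤ C * (‖v‖ * Real.sin ε) := mul_le_mul_of_nonneg_left hqle (le_of_lt hC0)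
        _ ≤ C * ((t / (Real.cos ε * ‖z‖)) * Real.sin ε) :=
            mul_le_mul_of_nonneg_left
              (mul_le_mul_of_nonneg_right hvle hsε) (le_of_lt hC0)
        _ = C * (Real.sin ε / Real.cos ε) * (t / ‖z‖) := by field_simp
    calc N v ≤ (t / ‖z‖ ^ 2) * N z + N q := hNdec
      _ ≤ (t / ‖z‖ ^ 2) * N z + C * (Real.sin ε / Real.cos ε) * (t / ‖z‖) := by linarith
      _ = t * ((N z + C * ‖z‖ * (Real.sin ε / Real.cos ε)) / ‖z‖ ^ 2) := by
          field_simp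

lemma partition_upper (hN0 : ∀ x, N x = 0 ↔ x = 0)
    (hNsmul : ∀ (c : ℝ) (x), N (c • x) = |c| * N x)
    (hNadd : ∀ x y, N (x + y) ≤ N x + N y)
    {C c : ℝ} (hC0 : 0 < C) (hCb : ∀ x, N x ≤ C * ‖x‖)
    (hc0 : 0 < c) (hcb : ∀ x, c * ‖x‖ ≤ N x)
    {z : EuclideanSpace ℝ (Fin d)} (hz : z ≠ 0)
    {ε : ℝ} (hε : 0 < ε) (hεlt : ε < Real.pi / 2)
    (k : ℕ) (v : ℕ → EuclideanSpace ℝ (Fin d))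
    (hsum : ∑ i ∈ Finset.range k, v i = z)
    (hbad : ∑ i ∈ (Finset.range k).filter
        (fun i => ε < InnerProductGeometry.angle (v i) z), N (v i) < ε) :
    ∑ i ∈ Finset.range k, N (v i) ≤
      ε + ((N z + C * ‖z‖ * (Real.sin ε / Real.cos ε)) / ‖z‖ ^ 2)
        * (‖z‖ ^ 2 + ‖z‖ * ε / c) := by
  classical
  have hzn : (0:ℝ) < ‖z‖ := norm_pos_iff.mpr hz
  have hcosε : 0 < Real.cos ε := Real.cos_pos_of_mem_Ioo ⟨by linarith [Real.pi_div_two_pos], hεlt⟩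
  have hsinε : 0 ≤ Real.sin ε := Real.sin_nonneg_of_nonneg_of_le_pi (le_of_lt hε)
    (by linarith [Real.pi_div_two_pos, Real.pi_pos])
  set P : ℕ → Prop := fun i => ε < InnerProductGeometry.angle (v i) z with hP
  set D : ℝ := (N z + C * ‖z‖ * (Real.sin ε / Real.cos ε)) / ‖z‖ ^ 2 with hD
  have hD0 : 0 ≤ D := by
    have hNz0 : 0 ≤ N z := auxN_nonneg hN0 hNsmul hNadd z
    positivity
  have hsplit : ∑ i ∈ Finset.range k, N (v i)
      = (∑ i ∈ (Finset.range k).filter P, N (v i))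
        + ∑ i ∈ (Finset.range k).filter (fun i => ¬ P i), N (v i) :=
    (Finset.sum_filter_add_sum_filter_not _ _ _).symm
  -- good part
  have hgood : ∀ i ∈ (Finset.range k).filter (fun i => ¬ P i),
      0 ≤ (inner ℝ (v i) z : ℝ) ∧ N (v i) ≤ (inner ℝ (v i) z : ℝ) * D := by
    intro i hi
    have := (Finset.mem_filter.mp hi).2
    exact good_vec hN0 hNsmul hNadd hC0 hCb hz hε hεlt (v i) (not_lt.mp this)
  have hgoodsum : ∑ i ∈ (Finset.range k).filter (fun i => ¬ P i), N (v i)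
      ≤ (∑ i ∈ (Finset.range k).filter (fun i => ¬ P i), (inner ℝ (v i) z : ℝ)) * D := by
    rw [Finset.sum_mul]
    exact Finset.sum_le_sum fun i hi => (hgood i hi).2
  -- bound on sum of inner products over good part
  have hinn : ∑ i ∈ (Finset.range k).filter (fun i => ¬ P i), (inner ℝ (v i) z : ℝ)
      = ‖z‖ ^ 2 - ∑ i ∈ (Finset.range k).filter P, (inner ℝ (v i) z : ℝ) := by
    have h1 : (∑ i ∈ (Finset.range k).filter P, (inner ℝ (v i) z : ℝ))
        + ∑ i ∈ (Finset.range k).filter (fun i => ¬ P i), (inner ℝ (v i) z : ℝ)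
        = ∑ i ∈ Finset.range k, (inner ℝ (v i) z : ℝ) :=
      Finset.sum_filter_add_sum_filter_not _ _ _
    have h2 : ∑ i ∈ Finset.range k, (inner ℝ (v i) z : ℝ) = ‖z‖ ^ 2 := by
      rw [← sum_inner, hsum, real_inner_self_eq_norm_sq]
    linarith
  have hbadinner : - (∑ i ∈ (Finset.range k).filter P, (inner ℝ (v i) z : ℝ)) ≤ ‖z‖ * ε / c := by
    have h1 : |∑ i ∈ (Finset.range k).filter P, (inner ℝ (v i) z : ℝ)|
        ≤ ∑ i ∈ (Finset.range k).filter P, ‖v i‖ * ‖z‖ := by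
      calc |∑ i ∈ (Finset.range k).filter P, (inner ℝ (v i) z : ℝ)|
          ≤ ∑ i ∈ (Finset.range k).filter P, |(inner ℝ (v i) z : ℝ)| :=
            Finset.abs_sum_le_sum_abs _ _
        _ ≤ ∑ i ∈ (Finset.range k).filter P, ‖v i‖ * ‖z‖ :=
            Finset.sum_le_sum fun i _ => abs_real_inner_le_norm _ _
    have h2 : ∑ i ∈ (Finset.range k).filter P, ‖v i‖ * ‖z‖ ≤ ‖z‖ * ε / c := by
      have h3 : ∀ i ∈ (Finset.range k).filter P, ‖v i‖ ≤ N (v i) / c := by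
        intro i _
        rw [le_div_iff₀ hc0]
        linarith [hcb (v i)]
      calc ∑ i ∈ (Finset.range k).filter P, ‖v i‖ * ‖z‖
          ≤ ∑ i ∈ (Finset.range k).filter P, (N (v i) / c) * ‖z‖ :=
            Finset.sum_le_sum fun i hi =>
              mul_le_mul_of_nonneg_right (h3 i hi) (norm_nonneg z)
        _ = (∑ i ∈ (Finset.range k).filter P, N (v i)) * ‖z‖ / c := by
            rw [Finset.sum_mul, Finset.sum_div]
            exact Finset.sum_congr rfl fun i _ => by ring
        _ ≤ ‖z‖ * ε / c := by
            have := hbad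
            rw [div_le_div_iff_of_pos_right hc0]
            nlinarith
    have := abs_le.mp h1
    linarith [le_trans (abs_le.mp h1).2 h2, neg_le_of_abs_le h1]
  have hgoodinner : ∑ i ∈ (Finset.range k).filter (fun i => ¬ P i), (inner ℝ (v i) z : ℝ)
      ≤ ‖z‖ ^ 2 + ‖z‖ * ε / c := by
    rw [hinn]; linarith
  have hgoodnn : 0 ≤ ∑ i ∈ (Finset.range k).filter (fun i => ¬ P i), (inner ℝ (v i) z : ℝ) :=
    Finset.sum_nonneg fun i hi => (hgood i hi).1
  calc ∑ i ∈ Finset.range k, N (v i)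
      = (∑ i ∈ (Finset.range k).filter P, N (v i))
        + ∑ i ∈ (Finset.range k).filter (fun i => ¬ P i), N (v i) := hsplit
    _ ≤ ε + (∑ i ∈ (Finset.range k).filter (fun i => ¬ P i), (inner ℝ (v i) z : ℝ)) * D := by
        linarith
    _ ≤ ε + D * (‖z‖ ^ 2 + ‖z‖ * ε / c) := by
        rw [mul_comm]
        have := mul_le_mul_of_nonneg_left hgoodinner hD0
        linarith
end Aux4
lemma exists_eps {C c Nz nz : ℝ} (hC0 : 0 < C) (hc0 : 0 < c) (hNz : 0 ≤ Nz) (hnz : 0 < nz)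
    {η : ℝ} (hη : 0 < η) :
    ∃ ε : ℝ, 0 < ε ∧ ε < Real.pi / 2 ∧
      ε + ((Nz + C * nz * (Real.sin ε / Real.cos ε)) / nz ^ 2) * (nz ^ 2 + nz * ε / c)
        < Nz + η := by
  set G : ℝ → ℝ := fun ε =>
    ε + ((Nz + C * nz * (Real.sin ε / Real.cos ε)) / nz ^ 2) * (nz ^ 2 + nz * ε / c) with hG
  have h1 : ContinuousAt (fun ε : ℝ => Real.sin ε / Real.cos ε) 0 :=
    Real.continuous_sin.continuousAt.div Real.continuous_cos.continuousAt (by simp)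
  have hcont : ContinuousAt G 0 := by
    apply ContinuousAt.add continuousAt_id
    exact (((continuousAt_const.add (continuousAt_const.mul h1)).div_const _).mul
      (continuousAt_const.add ((continuousAt_const.mul continuousAt_id).div_const _)))
  have hG0 : G 0 = Nz := by
    simp only [hG, Real.sin_zero, Real.cos_zero, zero_div, div_one, mul_zero, add_zero,
      zero_add, mul_zero]
    field_simp
  have htend : Filter.Tendsto G (nhds 0) (nhds Nz) := by
    rw [← hG0]; exact hcont
  have h2 : ∀ᶠ ε in nhds (0:ℝ), G ε < Nz + η :=
    htend.eventually_lt_const (by linarith)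
  have h3 : ∀ᶠ ε in nhds (0:ℝ), ε < Real.pi / 2 := by
    filter_upwards [Iio_mem_nhds Real.pi_div_two_pos] with x hx
    exact hx
  have h4 : ∀ᶠ ε in nhdsWithin (0:ℝ) (Set.Ioi 0), G ε < Nz + η ∧ ε < Real.pi / 2 :=
    ((h2.and h3).filter_mono nhdsWithin_le_nhds)
  obtain ⟨ε, hε1, hε2⟩ := (h4.and eventually_mem_nhdsWithin).exists
  exact ⟨ε, hε2, hε1.2, hε1.1⟩


set_option maxHeartbeats 1000000 in
/-- For paths `γ_n` from `0` to `z ≠ 0`: condition (1) (polygonal approximations have small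
total length along segments of large angle with `0z`) implies condition (2)
(`ℓ̂(γ_n) → N(z)`) for every norm `N`, and (2) implies (1) whenever the closed unit ball of
`N` is strictly convex. -/
theorem polygonal_angle_length_criterion {d : ℕ}
    (N : EuclideanSpace ℝ (Fin d) → ℝ)
    (hN0 : ∀ x, N x = 0 ↔ x = 0)
    (hNsmul : ∀ (c : ℝ) (x), N (c • x) = |c| * N x)
    (hNadd : ∀ x y, N (x + y) ≤ N x + N y)
    (z : EuclideanSpace ℝ (Fin d)) (hz : z ≠ 0)
    (a b : ℕ → ℝ) (hab : ∀ n, a n < b n)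
    (γ : ℕ → ℝ → EuclideanSpace ℝ (Fin d))
    (hcont : ∀ n, ContinuousOn (γ n) (Set.Icc (a n) (b n)))
    (h0 : ∀ n, γ n (a n) = 0) (h1 : ∀ n, γ n (b n) = z) :
    (SmallBadAngleLength N z a b γ →
      Filter.Tendsto (fun n => lenWith N (γ n) (a n) (b n)) Filter.atTop
        (nhds (ENNReal.ofReal (N z)))) ∧
    ((∀ x y, N x = 1 → N y = 1 → x ≠ y → N ((2 : ℝ)⁻¹ • (x + y)) < 1) →
      Filter.Tendsto (fun n => lenWith N (γ n) (a n) (b n)) Filter.atTop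
        (nhds (ENNReal.ofReal (N z))) →
      SmallBadAngleLength N z a b γ) := by
  obtain ⟨C, hC0, hCb⟩ := auxN_exists_C hN0 hNsmul hNadd
  obtain ⟨c, hc0, hcb⟩ := auxN_exists_c hN0 hNsmul hNadd hz
  have hNnonneg := auxN_nonneg hN0 hNsmul hNadd
  have hzn : (0:ℝ) < ‖z‖ := norm_pos_iff.mpr hz
  have hNz0 : 0 ≤ N z := hNnonneg z
  have hsumz : ∀ (n k : ℕ) (t : ℕ → ℝ), t 0 = a n → t k = b n →
      ∑ i ∈ Finset.range k, (γ n (t (i+1)) - γ n (t i)) = z := by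
    intro n k t h0' h1'
    rw [Finset.sum_range_sub (fun j => γ n (t j)) k]
    simp only [h0', h1', h0 n, h1 n, sub_zero]
  have hlow : ∀ n, ENNReal.ofReal (N z) ≤ lenWith N (γ n) (a n) (b n) := by
    intro n
    have h := lenWith_ge_endpoints (N := N) hNnonneg (γ n) (le_of_lt (hab n))
    rw [h1 n, h0 n, sub_zero] at h
    exact h
  constructor
  · -- (1) → (2)
    intro hsmall
    rw [ENNReal.tendsto_nhds (by simp : ENNReal.ofReal (N z) ≠ ⊤)]
    intro ε' hε'
    have hmin0 : (0:ℝ≥0∞) < min 1 ε' := lt_min one_pos hε'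
    have hminT : min 1 ε' ≠ ⊤ := ne_top_of_le_ne_top ENNReal.one_ne_top (min_le_left _ _)
    set η : ℝ := (min 1 ε').toReal with hη
    have hηpos : 0 < η := ENNReal.toReal_pos (ne_of_gt hmin0) hminT
    have hηle : ENNReal.ofReal η ≤ ε' := by
      rw [hη, ENNReal.ofReal_toReal hminT]
      exact min_le_right _ _
    obtain ⟨ε, hε0, hεlt, hεbound⟩ := exists_eps hC0 hc0 hNz0 hzn hηpos
    obtain ⟨N₀, hN₀⟩ := hsmall ε hε0
    rw [Filter.eventually_atTop]
    refine ⟨N₀, fun n hn => ?_⟩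
    constructor
    · exact le_trans tsub_le_self (hlow n)
    · have hub : lenWith N (γ n) (a n) (b n) ≤ ENNReal.ofReal (N z + η) := by
        apply lenWith_le hNnonneg
        intro k t ht h0' h1'
        have hsum := hsumz n k t h0' h1'
        have hbad := hN₀ n hn k t ht h0' h1'
        have hup := partition_upper hN0 hNsmul hNadd hC0 hCb hc0 hcb hz hε0 hεlt k
          (fun i => γ n (t (i+1)) - γ n (t i)) hsum hbad
        linarith [hεbound]
      calc lenWith N (γ n) (a n) (b n) ≤ ENNReal.ofReal (N z + η) := hub
        _ = ENNReal.ofReal (N z) + ENNReal.ofReal η := ENNReal.ofReal_add hNz0 (le_of_lt hηpos)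
        _ ≤ ENNReal.ofReal (N z) + ε' := add_le_add le_rfl hηle
  · -- (2) → (1)
    intro hSC htend ε hε
    rcases le_or_gt Real.pi ε with hπ | hπ
    · refine ⟨0, fun n _ k t _ _ _ => ?_⟩
      have hemp : (Finset.range k).filter
          (fun i => ε < InnerProductGeometry.angle (γ n (t (i + 1)) - γ n (t i)) z) = ∅ :=
        Finset.filter_false_of_mem fun i _ =>
          not_lt.mpr (le_trans (InnerProductGeometry.angle_le_pi _ _) hπ)
      rw [hemp, Finset.sum_empty]
      exact hε
    · obtain ⟨g, hgz, hg⟩ := aux_exists_g hN0 hNsmul hNadd z hz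
      obtain ⟨δ, hδ0, hδ⟩ := aux_exists_delta hN0 hNsmul hNadd hSC hz hgz hg hε hπ
      have hB : ENNReal.ofReal (N z) < ENNReal.ofReal (N z + δ / C * ε) := by
        rw [ENNReal.ofReal_lt_ofReal_iff (by positivity)]
        have : 0 < δ / C * ε := by positivity
        linarith
      have hev : ∀ᶠ n in Filter.atTop,
          lenWith N (γ n) (a n) (b n) < ENNReal.ofReal (N z + δ / C * ε) :=
        htend.eventually_lt_const hB
      obtain ⟨N₀, hN₀⟩ := Filter.eventually_atTop.mp hev
      refine ⟨N₀, fun n hn k t ht h0' h1' => ?_⟩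
      by_contra hcon
      push_neg at hcon
      have hsum := hsumz n k t h0' h1'
      have hpl := partition_lower hN0 hNsmul hNadd hgz hg hδ0 hC0 hCb hδ k
        (fun i => γ n (t (i+1)) - γ n (t i)) hsum
      have hstep : N z + δ / C * ε ≤ ∑ i ∈ Finset.range k, N (γ n (t (i+1)) - γ n (t i)) := by
        have h5 : δ / C * ε ≤ δ / C * ∑ i ∈ (Finset.range k).filter
            (fun i => ε < InnerProductGeometry.angle (γ n (t (i + 1)) - γ n (t i)) z),
            N (γ n (t (i + 1)) - γ n (t i)) :=
          mul_le_mul_of_nonneg_left hcon (by positivity)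
        linarith [hpl]
      have hge : ENNReal.ofReal (N z + δ / C * ε) ≤ lenWith N (γ n) (a n) (b n) :=
        le_trans (ENNReal.ofReal_le_ofReal hstep)
          (lenWith_ge hNnonneg (γ n) (a n) (b n) k t ht h0' h1')
      exact absurd (hN₀ n hn) (not_lt.mpr hge)
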